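/- Let X be a Banach space, M a metric space, and f : X → M a coarse map with Lip_∞(f) > 0. Then for every ε, t > 0 and δ ∈ (0,1) there exist x, y ∈ X with ‖x−y‖ > t and f(Mid(x,y,δ)) ⊆ Mid(f(x), f(y), (1+ε)δ). -/

import Mathlib

open Filter Topology Metric Set Pointwise

noncomputable section

namespace CLG

variable {X Y : Type*}

/-- The expansion modulus `ω_f`. -/
def expansionMod [PseudoMetricSpace X] [PseudoMetricSpace Y] (f : X → Y) (t : ℝ) : ℝ :=
  sSup {r : ℝ | ∃ x y : X, dist x y ≤ t ∧ r = dist (f x) (f y)}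

/-- The compression modulus `ρ_f`. -/
def compressionMod [PseudoMetricSpace X] [PseudoMetricSpace Y] (f : X → Y) (t : ℝ) : ℝ :=
  sInf {r : ℝ | ∃ x y : X, t ≤ dist x y ∧ r = dist (f x) (f y)}

/-- `f` is a coarse map: `ω_f(t) < ∞` for every `t`. -/
def IsCoarseMap [PseudoMetricSpace X] [PseudoMetricSpace Y] (f : X → Y) : Prop :=
  ∀ t : ℝ, ∃ C : ℝ, ∀ x y : X, dist x y ≤ t → dist (f x) (f y) ≤ C

/-- `f` is a coarse embedding: a coarse map with `ρ_f(t) → ∞`. -/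
def IsCoarseEmbedding [PseudoMetricSpace X] [PseudoMetricSpace Y] (f : X → Y) : Prop :=
  IsCoarseMap f ∧ ∀ M : ℝ, ∃ t : ℝ, ∀ x y : X, t ≤ dist x y → M ≤ dist (f x) (f y)

/-- `f` is a uniform embedding: `ω_f(t) → 0` as `t → 0` and `ρ_f(t) > 0` for `t > 0`. -/
def IsUniformEmbeddingMap [PseudoMetricSpace X] [PseudoMetricSpace Y] (f : X → Y) : Prop :=
  (∀ ε > (0:ℝ), ∃ δ > (0:ℝ), ∀ x y : X, dist x y ≤ δ → dist (f x) (f y) ≤ ε) ∧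
  (∀ t > (0:ℝ), ∃ r > (0:ℝ), ∀ x y : X, t ≤ dist x y → r ≤ dist (f x) (f y))

/-- `f` is a coarse Lipschitz embedding. -/
def IsCoarseLipschitzEmbedding [PseudoMetricSpace X] [PseudoMetricSpace Y] (f : X → Y) : Prop :=
  ∃ L : ℝ, 0 < L ∧ ∀ x y : X,
    dist (f x) (f y) ≤ L * dist x y + L ∧ L⁻¹ * dist x y - L ≤ dist (f x) (f y)

def CoarseLipschitzEmbeds (X Y : Type*) [PseudoMetricSpace X] [PseudoMetricSpace Y] : Prop :=
  ∃ f : X → Y, IsCoarseLipschitzEmbedding f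

/-- The set of exponents `α > 0` admitting a coarse embedding `f : X → Y` with
`ρ_f(t) ≥ L⁻¹ t^α − L`. -/
def compressionSet (X Y : Type*) [NormedAddCommGroup X] [NormedAddCommGroup Y] : Set ℝ :=
  {α : ℝ | 0 < α ∧ ∃ f : X → Y, IsCoarseMap f ∧ ∃ L : ℝ, 0 < L ∧
    ∀ x y : X, L⁻¹ * ‖x - y‖ ^ α - L ≤ ‖f x - f y‖}

/-- The compression exponent `α_Y(X)` (note the argument order: `compressionExp X Y = α_Y(X)`).
By convention `sSup ∅ = 0`, matching `α_Y(X) = 0` when no such embedding exists. -/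
def compressionExp (X Y : Type*) [NormedAddCommGroup X] [NormedAddCommGroup Y] : ℝ :=
  sSup (compressionSet X Y)

/-- The modulus of asymptotic uniform smoothness `ρ̄_X(t)`. -/
def ausModulus (X : Type*) [NormedAddCommGroup X] [NormedSpace ℝ X] (t : ℝ) : ℝ :=
  ⨆ x : {x : X // ‖x‖ = 1},
    ⨅ E : {E : Submodule ℝ X // FiniteDimensional ℝ (X ⧸ E)},
      ⨆ h : {h : X // h ∈ E.1 ∧ ‖h‖ = 1}, (‖x.1 + t • h.1‖ - 1)

/-- The modulus of asymptotic uniform convexity `δ̄_X(t)`. -/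
def aucModulus (X : Type*) [NormedAddCommGroup X] [NormedSpace ℝ X] (t : ℝ) : ℝ :=
  ⨅ x : {x : X // ‖x‖ = 1},
    ⨆ E : {E : Submodule ℝ X // FiniteDimensional ℝ (X ⧸ E)},
      ⨅ h : {h : X // h ∈ E.1 ∧ ‖h‖ = 1}, (‖x.1 + t • h.1‖ - 1)

/-- Asymptotically uniformly smooth: `ρ̄_X(t)/t → 0` as `t → 0⁺`. -/
def AsympUniformlySmooth (X : Type*) [NormedAddCommGroup X] [NormedSpace ℝ X] : Prop :=
  Tendsto (fun t => ausModulus X t / t) (𝓝[>] (0:ℝ)) (𝓝 0)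

/-- Asymptotically `p`-uniformly smooth: `ρ̄_X(t) ≤ C t^p` on `[0,1]`. -/
def AsympPUnifSmooth (X : Type*) [NormedAddCommGroup X] [NormedSpace ℝ X] (p : ℝ) : Prop :=
  ∃ C > (0:ℝ), ∀ t ∈ Set.Icc (0:ℝ) 1, ausModulus X t ≤ C * t ^ p

/-- Asymptotically `p`-uniformly convex: `δ̄_X(t) ≥ C t^p` on `[0,1]`. -/
def AsympPUnifConvex (X : Type*) [NormedAddCommGroup X] [NormedSpace ℝ X] (p : ℝ) : Prop :=
  ∃ C > (0:ℝ), ∀ t ∈ Set.Icc (0:ℝ) 1, C * t ^ p ≤ aucModulus X t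

/-- Reflexivity of a Banach space: the canonical embedding into the double dual is onto. -/
def BanachReflexive (X : Type*) [NormedAddCommGroup X] [NormedSpace ℝ X] : Prop :=
  Function.Surjective (NormedSpace.inclusionInDoubleDual ℝ X)

/-- A weakly null sequence. -/
def WeaklyNull [NormedAddCommGroup X] [NormedSpace ℝ X] (x : ℕ → X) : Prop :=
  ∀ φ : X →L[ℝ] ℝ, Tendsto (fun n => φ (x n)) atTop (𝓝 0)

/-- A semi-normalized sequence. -/
def SemiNormalized [NormedAddCommGroup X] (x : ℕ → X) : Prop :=
  ∃ a b : ℝ, 0 < a ∧ ∀ n, a ≤ ‖x n‖ ∧ ‖x n‖ ≤ b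

/-- The Banach-Saks property. -/
def BanachSaksProp (X : Type*) [NormedAddCommGroup X] [NormedSpace ℝ X] : Prop :=
  ∀ x : ℕ → X, (∃ b : ℝ, ∀ n, ‖x n‖ ≤ b) → ∃ φ : ℕ → ℕ, StrictMono φ ∧ ∃ L : X,
    Tendsto (fun k : ℕ => (k:ℝ)⁻¹ • ∑ j ∈ Finset.range k, x (φ j)) atTop (𝓝 L)

/-- The alternating Banach-Saks property. -/
def AltBanachSaks (X : Type*) [NormedAddCommGroup X] [NormedSpace ℝ X] : Prop :=
  ∀ x : ℕ → X, (∃ b : ℝ, ∀ n, ‖x n‖ ≤ b) → ∃ φ : ℕ → ℕ, StrictMono φ ∧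
    ∃ ε : ℕ → ℝ, (∀ j, ε j = 1 ∨ ε j = -1) ∧ ∃ L : X,
      Tendsto (fun k : ℕ => (k:ℝ)⁻¹ • ∑ j ∈ Finset.range k, ε j • x (φ j)) atTop (𝓝 L)

/-- The `p`-Banach-Saks property. -/
def PBanachSaks (X : Type*) [NormedAddCommGroup X] [NormedSpace ℝ X] (p : ℝ) : Prop :=
  ∀ x : ℕ → X, SemiNormalized x → WeaklyNull x →
    ∃ φ : ℕ → ℕ, StrictMono φ ∧ ∃ c > (0:ℝ), ∀ (k : ℕ) (n : Fin k → ℕ),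
      StrictMono n → (∀ i, k ≤ n i) → ‖∑ i, x (φ (n i))‖ ≤ c * (k : ℝ) ^ (1 / p)

/-- The `p`-co-Banach-Saks property. -/
def PCoBanachSaks (X : Type*) [NormedAddCommGroup X] [NormedSpace ℝ X] (p : ℝ) : Prop :=
  ∀ x : ℕ → X, SemiNormalized x → WeaklyNull x →
    ∃ φ : ℕ → ℕ, StrictMono φ ∧ ∃ c > (0:ℝ), ∀ (k : ℕ) (n : Fin k → ℕ),
      StrictMono n → (∀ i, k ≤ n i) → c * (k : ℝ) ^ (1 / p) ≤ ‖∑ i, x (φ (n i))‖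

/-- The almost `p`-co-Banach-Saks property. -/
def AlmostPCoBanachSaks (X : Type*) [NormedAddCommGroup X] [NormedSpace ℝ X] (p : ℝ) : Prop :=
  ∀ x : ℕ → X, SemiNormalized x → WeaklyNull x →
    ∃ φ : ℕ → ℕ, StrictMono φ ∧ ∃ θ : ℕ → ℝ, (∀ j, 1 ≤ θ j) ∧
      (∀ α > (0:ℝ), Tendsto (fun j : ℕ => (j:ℝ) ^ α / θ j) atTop atTop) ∧
      ∀ (k : ℕ) (n : Fin k → ℕ), StrictMono n → (∀ i, k ≤ n i) →
        (k:ℝ) ^ (1 / p) / θ k ≤ ‖∑ i, x (φ (n i))‖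

/-- `X` contains an isomorphic copy of `ℓ₁`, witnessed by a sequence equivalent to the
unit vector basis of `ℓ₁`. -/
def ContainsL1Copy (X : Type*) [NormedAddCommGroup X] [NormedSpace ℝ X] : Prop :=
  ∃ (x : ℕ → X) (c C : ℝ), 0 < c ∧ 0 < C ∧ ∀ (k : ℕ) (a : Fin k → ℝ),
    c * (∑ i, |a i|) ≤ ‖∑ i, a i • x i.1‖ ∧ ‖∑ i, a i • x i.1‖ ≤ C * ∑ i, |a i|

/-- The set of approximate midpoints of `x` and `y` with error `δ`. -/
def Mid [PseudoMetricSpace X] (x y : X) (δ : ℝ) : Set X :=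
  {z : X | max (dist x z) (dist y z) ≤ (1 + δ) / 2 * dist x y}

/-- `Lip_s(f) = sup_{t ≥ s} ω_f(t)/t`. -/
def lipAt [PseudoMetricSpace X] [PseudoMetricSpace Y] (f : X → Y) (s : ℝ) : ℝ :=
  ⨆ t : {t : ℝ // s ≤ t}, expansionMod f t.1 / t.1

/-- `Lip_∞(f) = inf_{s > 0} Lip_s(f)`. -/
def lipInfty [PseudoMetricSpace X] [PseudoMetricSpace Y] (f : X → Y) : ℝ :=
  ⨅ s : {s : ℝ // 0 < s}, lipAt f s.1

end CLG

open CLG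

namespace KRAux

variable {X M : Type*} [NormedAddCommGroup X] [NormedSpace ℝ X] [MetricSpace M]
variable {f : X → M}

lemma expSet_nonempty (f : X → M) {t : ℝ} (ht : 0 ≤ t) :
    {r : ℝ | ∃ x y : X, dist x y ≤ t ∧ r = dist (f x) (f y)}.Nonempty :=
  ⟨dist (f 0) (f 0), 0, 0, by simpa using ht, rfl⟩

lemma expSet_bdd (hf : IsCoarseMap f) (t : ℝ) :
    BddAbove {r : ℝ | ∃ x y : X, dist x y ≤ t ∧ r = dist (f x) (f y)} := by
  obtain ⟨C, hC⟩ := hf t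
  exact ⟨C, fun r ⟨x, y, hxy, hr⟩ => hr ▸ hC x y hxy⟩

lemma dist_le_exp (hf : IsCoarseMap f) {x y : X} {t : ℝ} (h : dist x y ≤ t) :
    dist (f x) (f y) ≤ expansionMod f t :=
  le_csSup (expSet_bdd hf t) ⟨x, y, h, rfl⟩

lemma exp_le (f : X → M) {t B : ℝ} (ht : 0 ≤ t)
    (h : ∀ x y : X, dist x y ≤ t → dist (f x) (f y) ≤ B) :
    expansionMod f t ≤ B :=
  csSup_le (expSet_nonempty f ht) (fun r ⟨x, y, hxy, hr⟩ => hr ▸ h x y hxy)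

lemma exp_nonneg (hf : IsCoarseMap f) {t : ℝ} (ht : 0 ≤ t) :
    0 ≤ expansionMod f t := by
  have := dist_le_exp hf (x := (0:X)) (y := 0) (t := t) (by simpa using ht)
  simpa using this

lemma chain (f : X → M) {s C : ℝ} (hs : 0 < s)
    (hC : ∀ x y : X, dist x y ≤ s → dist (f x) (f y) ≤ C) :
    ∀ n : ℕ, ∀ x y : X, dist x y ≤ n * s → dist (f x) (f y) ≤ n * C := by
  intro n
  induction n with
  | zero =>
    intro x y h
    have hxy : x = y := by
      have : dist x y ≤ 0 := by simpa using h
      exact dist_le_zero.1 this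
    simp [hxy]
  | succ n ih =>
    intro x y h
    have hn1 : (0:ℝ) < (n:ℝ) + 1 := by positivity
    set a : ℝ := (n:ℝ) / ((n:ℝ) + 1) with ha
    have ha0 : 0 ≤ a := by positivity
    set z : X := x + a • (y - x) with hz
    have hxz : dist x z = a * dist x y := by
      have h1 : x - z = (-a) • (y - x) := by rw [hz]; module
      rw [dist_eq_norm, h1, norm_smul, Real.norm_eq_abs, abs_neg, abs_of_nonneg ha0,
        ← dist_eq_norm, dist_comm y x]
    have hzy : dist z y = (1 - a) * dist x y := by
      have h1 : z - y = (1 - a) • (x - y) := by rw [hz]; module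
      rw [dist_eq_norm, h1, norm_smul, Real.norm_eq_abs, abs_of_nonneg, ← dist_eq_norm]
      have : a ≤ 1 := by rw [ha, div_le_one hn1]; linarith
      linarith
    have hcast : ((n+1 : ℕ) : ℝ) = (n:ℝ) + 1 := by push_cast; ring
    rw [hcast] at h ⊢
    have hd0 : 0 ≤ dist x y := dist_nonneg
    have haeq : a * ((n:ℝ) + 1) = (n:ℝ) := by rw [ha]; field_simp
    have h1a : (1 - a) * ((n:ℝ) + 1) = 1 := by rw [ha]; field_simp; ring
    have hxz' : dist x z ≤ (n:ℝ) * s := by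
      rw [hxz]
      calc a * dist x y ≤ a * (((n:ℝ) + 1) * s) := by
            exact mul_le_mul_of_nonneg_left h ha0
        _ = (n:ℝ) * s := by rw [← mul_assoc, haeq]
    have hzy' : dist z y ≤ s := by
      rw [hzy]
      have h1a0 : 0 ≤ 1 - a := by
        have : a ≤ 1 := by rw [ha, div_le_one hn1]; linarith
        linarith
      calc (1 - a) * dist x y ≤ (1 - a) * (((n:ℝ) + 1) * s) :=
            mul_le_mul_of_nonneg_left h h1a0
        _ = s := by rw [← mul_assoc, h1a, one_mul]
    calc dist (f x) (f y) ≤ dist (f x) (f z) + dist (f z) (f y) := dist_triangle _ _ _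
      _ ≤ (n:ℝ) * C + C := add_le_add (ih x z hxz') (hC z y hzy')
      _ = ((n:ℝ) + 1) * C := by ring

lemma lipAt_bddAbove (hf : IsCoarseMap f) {s : ℝ} (hs : 0 < s) :
    BddAbove (Set.range fun t : {t : ℝ // s ≤ t} => expansionMod f t.1 / t.1) := by
  obtain ⟨C, hC⟩ := hf s
  have hC0 : 0 ≤ C := le_trans (by simp) (hC 0 0 (by simp [hs.le]))
  refine ⟨2 * C / s, ?_⟩
  rintro r ⟨⟨t, ht⟩, rfl⟩
  have ht0 : 0 < t := hs.trans_le ht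
  have hfloor : t ≤ ((⌊t/s⌋₊ + 1 : ℕ) : ℝ) * s := by
    have h1 := Nat.lt_floor_add_one (t / s)
    have h2 : t / s * s = t := div_mul_cancel₀ t hs.ne'
    push_cast
    nlinarith
  have h1 : expansionMod f t ≤ ((⌊t/s⌋₊ + 1 : ℕ) : ℝ) * C :=
    exp_le f ht0.le fun x y hxy => chain f hs hC _ x y (hxy.trans hfloor)
  have h2 : ((⌊t/s⌋₊ + 1 : ℕ) : ℝ) ≤ t / s + 1 := by
    have := Nat.floor_le (by positivity : 0 ≤ t / s)
    push_cast; linarith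
  have h3 : expansionMod f t ≤ (t / s + 1) * C :=
    h1.trans (mul_le_mul_of_nonneg_right h2 hC0)
  show expansionMod f t / t ≤ 2 * C / s
  rw [div_le_div_iff₀ ht0 hs]
  have h4 : t / s * s = t := div_mul_cancel₀ t hs.ne'
  nlinarith [exp_nonneg hf ht0.le]

lemma exp_div_le_lipAt (hf : IsCoarseMap f) {s t : ℝ} (hs : 0 < s) (hst : s ≤ t) :
    expansionMod f t / t ≤ lipAt f s :=
  le_ciSup (lipAt_bddAbove hf hs) (⟨t, hst⟩ : {t : ℝ // s ≤ t})

lemma lipAt_nonneg (hf : IsCoarseMap f) {s : ℝ} (hs : 0 < s) : 0 ≤ lipAt f s :=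
  le_trans (div_nonneg (exp_nonneg hf hs.le) hs.le) (exp_div_le_lipAt hf hs le_rfl)

lemma lipInfty_le (hf : IsCoarseMap f) {s : ℝ} (hs : 0 < s) :
    lipInfty f ≤ lipAt f s := by
  refine ciInf_le ⟨0, ?_⟩ (⟨s, hs⟩ : {s : ℝ // 0 < s})
  rintro r ⟨⟨u, hu⟩, rfl⟩
  exact lipAt_nonneg hf hu

end KRAux

open KRAux

/-- (Kalton–Randrianarivony) A coarse map `f` with `Lip_∞(f) > 0` maps some approximate
midpoint set of arbitrarily distant points into an approximate midpoint set of the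
images, with error inflated by `1 + ε`. -/
theorem mid_image_subset_mid_of_coarse
    {X M : Type*} [NormedAddCommGroup X] [NormedSpace ℝ X] [CompleteSpace X]
    [MetricSpace M] (f : X → M) (hf : CLG.IsCoarseMap f) (hl : 0 < CLG.lipInfty f) :
    ∀ ε > (0:ℝ), ∀ t > (0:ℝ), ∀ δ ∈ Set.Ioo (0:ℝ) 1,
      ∃ x y : X, t < dist x y ∧
        f '' CLG.Mid x y δ ⊆ CLG.Mid (f x) (f y) ((1 + ε) * δ) := by
  intro ε hε t ht δ hδ
  obtain ⟨hδ0, hδ1⟩ := hδ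
  set ν : ℝ := CLG.lipInfty f with hνdef
  clear_value ν
  set D : ℝ := 3 + 2*δ + ε*δ with hD
  have hD0 : 0 < D := by positivity
  set η : ℝ := ν * ε * δ / D with hηdef
  have hη0 : 0 < η := by positivity
  have hηD : η * D = ν * ε * δ := div_mul_cancel₀ _ hD0.ne'
  have hην : η < ν := by nlinarith
  clear_value η D
  have h1 : CLG.lipInfty f < ν + η := by rw [← hνdef]; linarith
  obtain ⟨⟨s0, hs0⟩, hs0lt⟩ := exists_lt_of_ciInf_lt h1
  simp only at hs0lt
  obtain ⟨Ct, hCt⟩ := hf t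
  have hCt0 : 0 ≤ Ct := le_trans (by simp) (hCt 0 0 (by simp [ht.le]))
  have hνη : 0 < ν - η := by linarith
  set T : ℝ := max (2 * s0) (max (Ct / (ν - η) + 1) t) with hT
  have hT0 : 0 < T := lt_of_lt_of_le (by linarith) (le_max_left _ _)
  have hνT : ν ≤ lipAt f T := by rw [hνdef]; exact lipInfty_le hf hT0
  obtain ⟨⟨τ, hτT⟩, hτlt⟩ : ∃ u : {u : ℝ // T ≤ u}, ν - η < expansionMod f u.1 / u.1 :=
    exists_lt_of_lt_ciSup (lt_of_lt_of_le (by linarith) hνT)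
  simp only at hτlt hτT
  have hτ0 : 0 < τ := hT0.trans_le hτT
  have hωτ : (ν - η) * τ < expansionMod f τ := (lt_div_iff₀ hτ0).1 hτlt
  obtain ⟨r, hrmem, hrgt⟩ := exists_lt_of_lt_csSup (expSet_nonempty f hτ0.le) hωτ
  obtain ⟨x, y, hxyτ, rfl⟩ := hrmem
  refine ⟨x, y, ?_, ?_⟩
  · by_contra h
    push_neg at h
    have hd := hCt x y h
    have hTC : Ct / (ν - η) + 1 ≤ T := le_trans (le_max_left _ _) (le_max_right _ _)
    have h3 : (ν - η) * (Ct / (ν - η)) = Ct := mul_div_cancel₀ _ hνη.ne'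
    have h2 : (ν - η) * (Ct / (ν - η) + 1) ≤ (ν - η) * τ :=
      mul_le_mul_of_nonneg_left (hTC.trans hτT) hνη.le
    nlinarith
  · rintro w ⟨z, hz, rfl⟩
    have hz' : max (dist x z) (dist y z) ≤ (1+δ)/2 * dist x y := hz
    set u : ℝ := (1+δ)/2 * τ with hu
    have hu0 : 0 < u := by positivity
    have h2s0 : 2 * s0 ≤ T := le_max_left _ _
    have hs0u : s0 ≤ u := by nlinarith
    have hdd : (1+δ)/2 * dist x y ≤ u := by
      have : dist x y ≤ τ := hxyτ
      nlinarith
    have hxz : dist x z ≤ u := le_trans (le_trans (le_max_left _ _) hz') hdd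
    have hyz : dist y z ≤ u := le_trans (le_trans (le_max_right _ _) hz') hdd
    have hωu : expansionMod f u ≤ (ν + η) * u := by
      have h4 := exp_div_le_lipAt hf hs0 hs0u
      have h5 : expansionMod f u ≤ lipAt f s0 * u := (div_le_iff₀ hu0).1 h4
      exact h5.trans (mul_le_mul_of_nonneg_right hs0lt.le hu0.le)
    have hfx : dist (f x) (f z) ≤ (ν + η) * u := le_trans (dist_le_exp hf hxz) hωu
    have hfy : dist (f y) (f z) ≤ (ν + η) * u := le_trans (dist_le_exp hf hyz) hωu
    have hexp : η * (3 + 2*δ + ε*δ) = ν * ε * δ := by rw [← hD]; exact hηD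
    have key : (ν + η) * (1 + δ) ≤ (1 + (1 + ε) * δ) * (ν - η) := by
      linarith [hexp, hη0.le]
    have halg : (ν + η) * u ≤ (1 + (1 + ε) * δ) / 2 * ((ν - η) * τ) := by
      have h6 := mul_le_mul_of_nonneg_right key hτ0.le
      rw [hu]
      linarith [h6]
    have hfinal : (ν + η) * u ≤ (1 + (1 + ε) * δ) / 2 * dist (f x) (f y) := by
      have hpos : (0:ℝ) < (1 + (1 + ε) * δ) / 2 := by positivity
      exact halg.trans (mul_le_mul_of_nonneg_left hrgt.le hpos.le)
    exact max_le (hfx.trans hfinal) (hfy.trans hfinal)
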